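/- Let $p>1$, $F \in \mathbb{D}^{1,p}(H)$, and $(e_k)_{k\in\mathbb{N}}$ an orthonormal basis of $H$. Define $F_n := \sum_{k} ((-n/k) \vee \langle F, e_k\rangle \wedge (n/k))\, e_k$. Then each $F_n$ belongs to $\mathbb{D}^{1,p}(H) \cap L^\infty(\Omega;H)$ and $F_n \to F$ in $\mathbb{D}^{1,p}(H)$. Consequently $\mathbb{D}^{1,p}(H)\cap L^\infty(\Omega;H)$ is dense in $\mathbb{D}^{1,p}(H)$. -/

import Mathlib

open MeasureTheory Filter Topology
open scoped ENNReal RealInnerProductSpace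

/-! ### Auxiliary lemmas on the real clamp function -/

noncomputable def clampR (c a : ℝ) : ℝ := max (-c) (min a c)

lemma clampR_eq_self {c a : ℝ} (h : |a| ≤ c) : clampR c a = a := by
  rw [abs_le] at h
  unfold clampR
  rw [min_eq_left h.2, max_eq_right h.1]

lemma abs_clampR_le {c a : ℝ} (hc : 0 ≤ c) : |clampR c a| ≤ c := by
  rw [abs_le]
  constructor
  · exact le_max_left _ _
  · exact max_le (by linarith) (min_le_right _ _)

lemma abs_clampR_sub_clampR (c a b : ℝ) : |clampR c a - clampR c b| ≤ |a - b| := by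
  unfold clampR
  rw [max_comm (-c) (min a c), max_comm (-c) (min b c)]
  refine (abs_max_sub_max_le_abs _ _ _).trans ?_
  refine (abs_min_sub_min_le_max a c b c).trans ?_
  simp

lemma clampR_zero {c : ℝ} (hc : 0 ≤ c) : clampR c 0 = 0 := by
  unfold clampR
  rw [min_eq_left hc, max_eq_right (by linarith)]

lemma abs_clampR_le_abs {c a : ℝ} (hc : 0 ≤ c) : |clampR c a| ≤ |a| := by
  have := abs_clampR_sub_clampR c a 0
  simpa [clampR_zero hc] using this

lemma abs_clampR_sub_self {c a : ℝ} (hc : 0 ≤ c) : |clampR c a - a| ≤ |a| := by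
  rcases le_or_gt (|a|) c with h | h
  · rw [clampR_eq_self h]; simp [abs_nonneg]
  · rcases le_or_gt a c with h1 | h1
    · have ha : a < -c := by
        rcases abs_cases a with ⟨h2, _⟩ | ⟨h2, _⟩ <;> [linarith; linarith]
      have : clampR c a = -c := by
        unfold clampR; rw [min_eq_left h1, max_eq_left (by linarith)]
      rw [this, abs_of_nonneg (by linarith), abs_of_neg (by linarith)]
      linarith
    · have : clampR c a = c := by
        unfold clampR; rw [min_eq_right h1.le, max_eq_right (by linarith)]
      rw [this, abs_of_nonpos (by linarith), abs_of_pos (by linarith)]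
      linarith

/-! ### Mecke formula and truncation -/

/-- **Mecke's formula** (add-one form), characterizing Poisson random measures
with σ-finite intensity `μ`. -/
def MeckeAdd {Ω E : Type*} [MeasurableSpace Ω] [MeasurableSpace E]
    (P : Measure Ω) (μ : Measure E) (N : Ω → Measure E) : Prop :=
  ∀ f : Measure E → E → ℝ≥0∞, Measurable (Function.uncurry f) →
    ∫⁻ ω, ∫⁻ x, f (N ω) x ∂(N ω) ∂P
      = ∫⁻ ω, ∫⁻ x, f (N ω + Measure.dirac x) x ∂μ ∂P

/-- Coordinatewise truncation w.r.t. an orthonormal basis `e`: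
`trunc e n v = ∑_k ((-n/k) ∨ ⟪v, e_k⟫ ∧ (n/k)) e_k` (with `k` running through
`1, 2, …` encoded as `k+1` for `k : ℕ`). -/
noncomputable def trunc {H : Type*} [NormedAddCommGroup H] [InnerProductSpace ℝ H]
    (e : ℕ → H) (n : ℕ) (v : H) : H :=
  ∑' k : ℕ, (max (-((n : ℝ) / (k + 1))) (min ⟪v, e k⟫ ((n : ℝ) / (k + 1)))) • e k

/-! ### Hilbert space lemmas on `trunc` -/

section Hilbert

variable {H : Type*} [NormedAddCommGroup H] [InnerProductSpace ℝ H] [CompleteSpace H]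
  {e : ℕ → H} (he : Orthonormal ℝ e)
  (hbasis : (Submodule.span ℝ (Set.range e)).topologicalClosure = ⊤)

lemma two_toReal_pos : (0:ℝ) < (2 : ℝ≥0∞).toReal := by norm_num

lemma cdiv_nonneg (n k : ℕ) : (0:ℝ) ≤ (n : ℝ) / (k + 1) := by positivity

/-- ℓ² comparison lemma. -/
lemma lp_norm_le_lp_norm (f g : lp (fun _ : ℕ => ℝ) 2) (h : ∀ k, ‖f k‖ ≤ ‖g k‖) :
    ‖f‖ ≤ ‖g‖ := by
  have h2 := two_toReal_pos
  rw [← Real.rpow_le_rpow_iff (norm_nonneg _) (norm_nonneg _) h2,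
    lp.norm_rpow_eq_tsum h2, lp.norm_rpow_eq_tsum h2]
  exact Summable.tsum_le_tsum
    (fun k => Real.rpow_le_rpow (norm_nonneg _) (h k) h2.le)
    ((lp.memℓp f).summable h2) ((lp.memℓp g).summable h2)

noncomputable def hb : HilbertBasis ℕ ℝ H := HilbertBasis.mk he hbasis.ge

lemma hb_apply (k : ℕ) : hb he hbasis k = e k :=
  congrFun (HilbertBasis.coe_mk he hbasis.ge) k

lemma hb_repr_apply (v : H) (k : ℕ) : (hb he hbasis).repr v k = ⟪v, e k⟫ := by
  rw [HilbertBasis.repr_apply_apply, hb_apply, real_inner_comm]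

include he hbasis

lemma memℓp_clamp (n : ℕ) (v : H) :
    Memℓp (fun k : ℕ => clampR ((n : ℝ) / (k + 1)) ⟪v, e k⟫) 2 := by
  apply memℓp_gen
  refine Summable.of_nonneg_of_le
    (fun k => Real.rpow_nonneg (norm_nonneg _) _)
    (fun k => Real.rpow_le_rpow (norm_nonneg _) ?_ two_toReal_pos.le)
    (((lp.memℓp ((hb he hbasis).repr v)).summable two_toReal_pos))
  rw [hb_repr_apply he hbasis]
  exact abs_clampR_le_abs (cdiv_nonneg n k)

noncomputable def truncL2 (n : ℕ) (v : H) : lp (fun _ : ℕ => ℝ) 2 :=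
  ⟨fun k => clampR ((n : ℝ) / (k + 1)) ⟪v, e k⟫, memℓp_clamp he hbasis n v⟩

@[simp] lemma truncL2_apply (n : ℕ) (v : H) (k : ℕ) :
    truncL2 he hbasis n v k = clampR ((n : ℝ) / (k + 1)) ⟪v, e k⟫ := rfl

lemma trunc_eq (n : ℕ) (v : H) :
    trunc e n v = (hb he hbasis).repr.symm (truncL2 he hbasis n v) := by
  have h := (hb he hbasis).hasSum_repr_symm (truncL2 he hbasis n v)
  simp only [truncL2_apply, hb_apply] at h
  exact h.tsum_eq

lemma norm_trunc_sub_trunc (n : ℕ) (v w : H) :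
    ‖trunc e n v - trunc e n w‖ ≤ ‖v - w‖ := by
  rw [trunc_eq he hbasis, trunc_eq he hbasis, ← map_sub]
  rw [LinearIsometryEquiv.norm_map]
  have : ‖v - w‖ = ‖(hb he hbasis).repr (v - w)‖ := ((hb he hbasis).repr.norm_map _).symm
  rw [this]
  apply lp_norm_le_lp_norm
  intro k
  rw [lp.coeFn_sub]
  simp only [Pi.sub_apply, truncL2_apply, hb_repr_apply he hbasis, Real.norm_eq_abs,
    inner_sub_left]
  exact (abs_clampR_sub_clampR _ _ _).trans (by rw [← inner_sub_left])

lemma norm_trunc_sub_self (n : ℕ) (v : H) :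
    ‖trunc e n v - v‖ ≤ ‖v‖ := by
  conv_lhs => rw [trunc_eq he hbasis, ← (hb he hbasis).repr.symm_apply_apply v, ← map_sub]
  rw [LinearIsometryEquiv.norm_map]
  have : ‖v‖ = ‖(hb he hbasis).repr v‖ := ((hb he hbasis).repr.norm_map _).symm
  rw [this]
  apply lp_norm_le_lp_norm
  intro k
  rw [lp.coeFn_sub]
  simp only [Pi.sub_apply, truncL2_apply, hb_repr_apply he hbasis, Real.norm_eq_abs,
    LinearIsometryEquiv.symm_apply_apply]
  exact abs_clampR_sub_self (cdiv_nonneg n k)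

end Hilbert

section Hilbert2

variable {H : Type*} [NormedAddCommGroup H] [InnerProductSpace ℝ H] [CompleteSpace H]
  {e : ℕ → H} (he : Orthonormal ℝ e)
  (hbasis : (Submodule.span ℝ (Set.range e)).topologicalClosure = ⊤)

lemma summable_sq (n : ℕ) :
    Summable (fun k : ℕ => ‖(n:ℝ)/(k+1)‖ ^ (2 : ℝ≥0∞).toReal) := by
  have h : Summable (fun k : ℕ => ((n:ℝ))^2 * (1/((k:ℝ)+1)^2)) := by
    apply Summable.mul_left
    have h0 : Summable (fun m : ℕ => 1/(m:ℝ)^2) := Real.summable_one_div_nat_pow.mpr one_lt_two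
    have := (summable_nat_add_iff (f := fun m : ℕ => 1/(m:ℝ)^2) 1).2 h0
    simpa using this
  refine h.congr fun k => ?_
  rw [ENNReal.toReal_ofNat, show ((2:ℝ)) = ((2:ℕ):ℝ) by norm_num, Real.rpow_natCast,
    Real.norm_eq_abs, sq_abs, div_pow, mul_one_div]

noncomputable def truncBound (n : ℕ) : ℝ :=
  ‖(⟨fun k : ℕ => (n:ℝ)/(k+1), memℓp_gen (summable_sq n)⟩ : lp (fun _ : ℕ => ℝ) 2)‖

include he hbasis

lemma norm_trunc_le (n : ℕ) (v : H) : ‖trunc e n v‖ ≤ truncBound n := by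
  rw [trunc_eq he hbasis, LinearIsometryEquiv.norm_map]
  apply lp_norm_le_lp_norm
  intro k
  simp only [truncL2_apply, Real.norm_eq_abs]
  exact (abs_clampR_le (cdiv_nonneg n k)).trans (le_abs_self _)

lemma tendsto_trunc (v : H) : Tendsto (fun n : ℕ => trunc e n v) atTop (𝓝 v) := by
  rw [tendsto_iff_norm_sub_tendsto_zero]
  set t : ℝ := (2 : ℝ≥0∞).toReal with ht
  have ht0 : 0 < t := two_toReal_pos
  have hnorm : ∀ n : ℕ, trunc e n v - v
      = (hb he hbasis).repr.symm (truncL2 he hbasis n v - (hb he hbasis).repr v) := by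
    intro n
    rw [map_sub, LinearIsometryEquiv.symm_apply_apply, ← trunc_eq he hbasis]
  have key : Tendsto (fun n : ℕ => ‖trunc e n v - v‖ ^ t) atTop (𝓝 0) := by
    have heq : ∀ n : ℕ, ‖trunc e n v - v‖ ^ t
        = ∑' k : ℕ, ‖(truncL2 he hbasis n v - (hb he hbasis).repr v) k‖ ^ t := by
      intro n
      rw [hnorm n, LinearIsometryEquiv.norm_map, lp.norm_rpow_eq_tsum two_toReal_pos]
    simp only [heq]
    have h0 : (0:ℝ) = ∑' _ : ℕ, (0:ℝ) := tsum_zero.symm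
    rw [h0]
    apply tendsto_tsum_of_dominated_convergence
      (bound := fun k => ‖(hb he hbasis).repr v k‖ ^ t)
    · exact (lp.memℓp ((hb he hbasis).repr v)).summable ht0
    · intro k
      have hev : ∀ᶠ n : ℕ in atTop,
          ‖(truncL2 he hbasis n v - (hb he hbasis).repr v) k‖ ^ t = 0 := by
        filter_upwards [eventually_ge_atTop (⌈((k:ℝ)+1) * |⟪v, e k⟫|⌉₊)] with n hn
        have h1 : |⟪v, e k⟫| ≤ (n:ℝ)/(k+1) := by
          rw [le_div_iff₀ (by positivity)]
          calc |⟪v, e k⟫| * ((k:ℝ)+1) = ((k:ℝ)+1) * |⟪v, e k⟫| := by ring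
            _ ≤ n := by exact_mod_cast Nat.ceil_le.mp hn
        have h2 : (truncL2 he hbasis n v - (hb he hbasis).repr v) k = 0 := by
          rw [lp.coeFn_sub, Pi.sub_apply, truncL2_apply, hb_repr_apply he hbasis,
            clampR_eq_self h1, sub_self]
        rw [h2, norm_zero, Real.zero_rpow ht0.ne']
      exact Tendsto.congr' (hev.mono fun n h => h.symm) tendsto_const_nhds
    · filter_upwards with n k
      rw [Real.norm_eq_abs, abs_of_nonneg (Real.rpow_nonneg (norm_nonneg _) _)]
      apply Real.rpow_le_rpow (norm_nonneg _) _ ht0.le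
      rw [lp.coeFn_sub, Pi.sub_apply, truncL2_apply, hb_repr_apply he hbasis,
        Real.norm_eq_abs, Real.norm_eq_abs]
      exact abs_clampR_sub_self (cdiv_nonneg n k)
  have hcomp : Tendsto (fun n : ℕ => (‖trunc e n v - v‖ ^ t) ^ (1/t)) atTop (𝓝 0) := by
    have hc : ContinuousAt (fun y : ℝ => y ^ (1/t)) 0 :=
      Real.continuousAt_rpow_const 0 (1/t) (Or.inr (by positivity))
    have := hc.tendsto.comp key
    simpa [one_div, Real.zero_rpow (show t⁻¹ ≠ 0 by positivity), Function.comp_def] using this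
  refine hcomp.congr fun n => ?_
  rw [← Real.rpow_mul (norm_nonneg _), mul_one_div_cancel ht0.ne', Real.rpow_one]

end Hilbert2

/-! ### Dominated convergence for `eLpNorm` -/

lemma tendsto_eLpNorm_zero_of_dominated {α H' : Type*} [MeasurableSpace α]
    [NormedAddCommGroup H'] (ν : Measure α) {G : ℕ → α → H'} {bound : α → ℝ}
    (p : ℝ≥0∞) (hp0 : p ≠ 0) (hp' : p ≠ ∞)
    (hG : ∀ n, AEStronglyMeasurable (G n) ν)
    (hbound : MemLp bound p ν)
    (hle : ∀ n x, ‖G n x‖ ≤ bound x)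
    (hlim : ∀ x, Tendsto (fun n => G n x) atTop (𝓝 0)) :
    Tendsto (fun n => eLpNorm (G n) p ν) atTop (𝓝 0) := by
  have hq : 0 < p.toReal := ENNReal.toReal_pos hp0 hp'
  have hI : Tendsto (fun n => ∫⁻ x, (‖G n x‖₊ : ℝ≥0∞) ^ p.toReal ∂ν) atTop (𝓝 0) := by
    have h0 : (0 : ℝ≥0∞) = ∫⁻ _ : α, 0 ∂ν := by simp
    rw [h0]
    apply tendsto_lintegral_of_dominated_convergence'
      (bound := fun x => (‖bound x‖₊ : ℝ≥0∞) ^ p.toReal)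
    · intro n
      exact (ENNReal.continuous_rpow_const.measurable.comp_aemeasurable (hG n).enorm)
    · intro n
      filter_upwards with x
      apply ENNReal.rpow_le_rpow _ hq.le
      apply ENNReal.coe_le_coe.2
      have : ‖G n x‖ ≤ ‖bound x‖ := (hle n x).trans (le_abs_self _)
      exact_mod_cast this
    · exact (lintegral_rpow_enorm_lt_top_of_eLpNorm_lt_top hp0 hp' hbound.2).ne
    · filter_upwards with x
      have h1 : Tendsto (fun n => (‖G n x‖₊ : ℝ≥0∞)) atTop (𝓝 0) := by
        rw [← ENNReal.coe_zero, ENNReal.tendsto_coe]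
        have := (continuous_nnnorm.tendsto (0:H')).comp (hlim x)
        simpa [Function.comp_def] using this
      have := ((ENNReal.continuous_rpow_const (y := p.toReal)).tendsto (0:ℝ≥0∞)).comp h1
      simpa [ENNReal.zero_rpow_of_pos hq, Function.comp_def] using this
  have hfinal := ((ENNReal.continuous_rpow_const (y := 1 / p.toReal)).tendsto (0:ℝ≥0∞)).comp hI
  have h0 : ((0:ℝ≥0∞)) ^ (1 / p.toReal) = 0 := ENNReal.zero_rpow_of_pos (by positivity)
  rw [Function.comp_def] at hfinal
  simp only [h0] at hfinal
  refine hfinal.congr fun n => ?_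
  exact (eLpNorm_eq_lintegral_rpow_enorm_toReal (f := G n) hp0 hp').symm

/-! ### Main theorem -/

theorem trunc_approximation_D1p
    {Ω E H : Type*} [MeasurableSpace Ω] [MeasurableSpace E]
    [NormedAddCommGroup H] [InnerProductSpace ℝ H] [CompleteSpace H]
    [TopologicalSpace.SeparableSpace H]
    (P : Measure Ω) [IsProbabilityMeasure P] (μ : Measure E) [SigmaFinite μ]
    (N : Ω → Measure E) (hMecke : MeckeAdd P μ N) (hN : Measurable N)
    (p : ℝ≥0∞) (hp : 1 < p) (hp' : p ≠ ∞)
    (e : ℕ → H) (he : Orthonormal ℝ e)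
    (hbasis : (Submodule.span ℝ (Set.range e)).topologicalClosure = ⊤)
    (F : Ω → H) (f : Measure E → H) (hf : StronglyMeasurable f)
    (hF : ∀ᵐ ω ∂P, F ω = f (N ω)) (hFm : MemLp F p P)
    (hDF : MemLp (fun pr : Ω × E =>
        f (N pr.1 + Measure.dirac pr.2) - F pr.1) p (P.prod μ)) :
    (∀ n : ℕ,
      MemLp (fun ω => trunc e n (F ω)) ∞ P ∧
      MemLp (fun ω => trunc e n (F ω)) p P ∧
      MemLp (fun pr : Ω × E =>
          trunc e n (f (N pr.1 + Measure.dirac pr.2)) - trunc e n (F pr.1)) p (P.prod μ)) ∧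
    Tendsto (fun n => eLpNorm (fun ω => trunc e n (F ω) - F ω) p P) atTop (nhds 0) ∧
    Tendsto (fun n => eLpNorm (fun pr : Ω × E =>
        (trunc e n (f (N pr.1 + Measure.dirac pr.2)) - trunc e n (F pr.1))
          - (f (N pr.1 + Measure.dirac pr.2) - F pr.1)) p (P.prod μ)) atTop (nhds 0) := by
  have hp0 : p ≠ 0 := (zero_lt_one.trans hp).ne'
  -- `trunc e n` is `1`-Lipschitz, hence continuous
  have hlip : ∀ n : ℕ, Continuous (trunc e n) := by
    intro n
    refine (LipschitzWith.of_dist_le_mul (K := 1) fun v w => ?_).continuous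
    rw [dist_eq_norm, dist_eq_norm]
    simpa using norm_trunc_sub_trunc he hbasis n v w
  set g : Ω × E → H := fun pr => f (N pr.1 + Measure.dirac pr.2) with hg_def
  have hDFm : AEStronglyMeasurable (fun pr : Ω × E => g pr - F pr.1) (P.prod μ) := hDF.1
  have hF1 : AEStronglyMeasurable (fun pr : Ω × E => F pr.1) (P.prod μ) :=
    hFm.1.comp_quasiMeasurePreserving Measure.quasiMeasurePreserving_fst
  have hgm : AEStronglyMeasurable g (P.prod μ) := by
    have h := hDFm.add hF1
    have heq : ((fun pr : Ω × E => g pr - F pr.1) + fun pr : Ω × E => F pr.1) = g := by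
      funext pr; simp
    rwa [heq] at h
  have hmeas1 : ∀ n, AEStronglyMeasurable (fun ω => trunc e n (F ω)) P := fun n =>
    (hlip n).comp_aestronglyMeasurable hFm.1
  have hmeasg : ∀ n, AEStronglyMeasurable (fun pr : Ω × E => trunc e n (g pr)) (P.prod μ) :=
    fun n => (hlip n).comp_aestronglyMeasurable hgm
  have hmeasF1 : ∀ n, AEStronglyMeasurable (fun pr : Ω × E => trunc e n (F pr.1)) (P.prod μ) :=
    fun n => (hlip n).comp_aestronglyMeasurable hF1
  have hmemtop : ∀ n : ℕ, MemLp (fun ω => trunc e n (F ω)) ∞ P := fun n =>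
    memLp_top_of_bound (hmeas1 n) (truncBound n)
      (ae_of_all _ fun ω => norm_trunc_le he hbasis n (F ω))
  refine ⟨fun n => ⟨hmemtop n, (hmemtop n).mono_exponent le_top, ?_⟩, ?_, ?_⟩
  · refine MemLp.of_le hDF ((hmeasg n).sub (hmeasF1 n)) (ae_of_all _ fun pr => ?_)
    exact norm_trunc_sub_trunc he hbasis n (g pr) (F pr.1)
  · refine tendsto_eLpNorm_zero_of_dominated P p hp0 hp'
      (fun n => (hmeas1 n).sub hFm.1) hFm.norm
      (fun n ω => norm_trunc_sub_self he hbasis n (F ω)) (fun ω => ?_)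
    have := (tendsto_trunc he hbasis (F ω)).sub_const (F ω)
    simpa using this
  · refine tendsto_eLpNorm_zero_of_dominated (P.prod μ) p hp0 hp'
      (fun n => ((hmeasg n).sub (hmeasF1 n)).sub hDFm)
      (hDF.norm.const_mul 2) (fun n pr => ?_) (fun pr => ?_)
    · calc ‖(trunc e n (g pr) - trunc e n (F pr.1)) - (g pr - F pr.1)‖
          ≤ ‖trunc e n (g pr) - trunc e n (F pr.1)‖ + ‖g pr - F pr.1‖ := norm_sub_le _ _
        _ ≤ ‖g pr - F pr.1‖ + ‖g pr - F pr.1‖ :=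
            add_le_add_left (norm_trunc_sub_trunc he hbasis n _ _) _
        _ = 2 * ‖g pr - F pr.1‖ := by ring
    · have := ((tendsto_trunc he hbasis (g pr)).sub
        (tendsto_trunc he hbasis (F pr.1))).sub_const (g pr - F pr.1)
      simpa using this
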